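/- Let C and D be groupoids each having a finite set of objects. Then the canonical map from the profinite completion of C × D to the product of the profinite completions, ∧(C × D) → Ĉ × D̂, induced by the two projections, is an isomorphism of profinite groupoids. -/

import Mathlib

open CategoryTheory

/-- A factorization of a functor `F : C × D ⥤ E` (with `E` a finite groupoid) through a
product `A × B` of finite quotients of `C` and `D`: finite groupoids `A`, `B`, functors
`p : C ⥤ A` and `q : D ⥤ B` surjective on objects and on morphisms, and a (unique)
functor `G : A × B ⥤ E` with `(p × q) ⋙ G = F`. The existence of such factorizations,
for all finite `E`, says exactly that the canonical map of profinite groupoids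
`∧(C × D) → Ĉ × D̂` induced by the two projections is an isomorphism. -/
structure ProdQuotFactorization
    (C D E : Type) [Groupoid C] [Groupoid D] [Groupoid E] (F : C × D ⥤ E) where
  A : Type
  B : Type
  [gA : Groupoid.{u_3} A]
  [gB : Groupoid B]
  finA : Finite (Σ a a' : A, a ⟶ a')
  finB : Finite (Σ b b' : B, b ⟶ b')
  p : C ⥤ A
  q : D ⥤ B
  G : A × B ⥤ E
  p_surj_obj : Function.Surjective p.obj
  p_surj_map : Function.Surjective
    (fun z : Σ x y : C, x ⟶ y => (⟨p.obj z.1, p.obj z.2.1, p.map z.2.2⟩ : Σ a a' : A, a ⟶ a'))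
  q_surj_obj : Function.Surjective q.obj
  q_surj_map : Function.Surjective
    (fun z : Σ x y : D, x ⟶ y => (⟨q.obj z.1, q.obj z.2.1, q.map z.2.2⟩ : Σ b b' : B, b ⟶ b'))
  fact : p.prod q ⋙ G = F
  uniq : ∀ G' : A × B ⥤ E, p.prod q ⋙ G' = F → G' = G

namespace ProfiniteProductAux

universe w v

/-- A copy of `A` whose hom-sets live in an arbitrary universe `w` (possible since the
hom-sets of `A` are finite): homs are transported along `(x ⟶ y) ≃ ULift (Fin n)`. -/
structure Lifted (A : Type) : Type where
  as : A

namespace Lifted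

variable (A : Type) [Groupoid.{v} A] [∀ x y : A, Finite (x ⟶ y)]

/-- The chosen equivalence between a hom-set of `A` and its `ULift (Fin n)` copy. -/
noncomputable def e (x y : A) : (x ⟶ y) ≃ ULift.{w} (Fin (Nat.card (x ⟶ y))) :=
  (Finite.equivFin _).trans Equiv.ulift.symm

noncomputable instance groupoid : Groupoid.{w} (Lifted A) where
  Hom x y := ULift.{w} (Fin (Nat.card (x.as ⟶ y.as)))
  id x := e.{w} A x.as x.as (𝟙 x.as)
  comp {x y z} f g := e.{w} A x.as z.as ((e.{w} A x.as y.as).symm f ≫ (e.{w} A y.as z.as).symm g)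
  id_comp f := by simp
  comp_id f := by simp
  assoc f g h := by simp
  inv {x y} f := e.{w} A y.as x.as (Groupoid.inv ((e.{w} A x.as y.as).symm f))
  inv_comp f := by simp
  comp_inv f := by simp

/-- The canonical functor from `A` to its universe-lifted copy. -/
noncomputable def toLift : A ⥤ Lifted A where
  obj x := ⟨x⟩
  map {x y} f := e.{w} A x y f
  map_id x := rfl
  map_comp {x y z} f g := by
    show e.{w} A x z (f ≫ g) =
      e.{w} A x z ((e.{w} A x y).symm (e.{w} A x y f) ≫ (e.{w} A y z).symm (e.{w} A y z g))
    simp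

/-- The canonical functor from the universe-lifted copy of `A` back to `A`. -/
noncomputable def fromLift : Lifted A ⥤ A where
  obj x := x.as
  map {x y} f := (e.{w} A x.as y.as).symm f
  map_id x := by
    show (e.{w} A x.as x.as).symm (e.{w} A x.as x.as (𝟙 x.as)) = 𝟙 x.as
    simp
  map_comp {x y z} f g := by
    show (e.{w} A x.as z.as).symm (e.{w} A x.as z.as _) = _
    simp

lemma toLift_comp_fromLift : toLift A ⋙ fromLift A = 𝟭 A := by
  refine CategoryTheory.Functor.ext (fun x => rfl) ?_
  intro x y f
  simp [toLift, fromLift]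
  show f = 𝟙 _ ≫ f ≫ 𝟙 _
  simp only [Category.id_comp, Category.comp_id]

lemma fromLift_comp_toLift : fromLift A ⋙ toLift A = 𝟭 (Lifted A) := by
  refine CategoryTheory.Functor.ext (fun x => rfl) ?_
  rintro ⟨x⟩ ⟨y⟩ f
  simp [toLift, fromLift]
  show f = 𝟙 _ ≫ f ≫ 𝟙 _
  simp only [Category.id_comp, Category.comp_id]

/-- `toLift` is surjective on (triples encoding) morphisms. -/
lemma toLift_surj_map : Function.Surjective
    (fun z : Σ x y : A, x ⟶ y =>
      (⟨(toLift A).obj z.1, (toLift A).obj z.2.1, (toLift A).map z.2.2⟩ :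
        Σ a a' : Lifted A, a ⟶ a')) := by
  rintro ⟨⟨x⟩, ⟨y⟩, u⟩
  refine ⟨⟨x, y, (e A x y).symm u⟩, ?_⟩
  simp [toLift]

lemma finite_sigma [Finite A] : Finite (Σ x y : Lifted A, x ⟶ y) := by
  letI : Finite (Lifted A) :=
    Finite.of_injective (fun x : Lifted A => x.as)
      (fun a b h => by cases a; cases b; simpa using h)
  letI : ∀ x y : Lifted A, Finite (x ⟶ y) := fun x y =>
    Finite.of_equiv _ (e A x.as y.as)
  letI : ∀ x : Lifted A, Finite (Σ y : Lifted A, x ⟶ y) := fun x => Finite.instSigma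
  exact Finite.instSigma

end Lifted

universe w1 w2 w3 w4 w5 w6

/-- Composition distributes over products of functors. -/
lemma prod_functor_comp {A₁ : Type} [Category.{w1} A₁] {A₂ : Type} [Category.{w2} A₂]
    {A₃ : Type} [Category.{w3} A₃] {B₁ : Type} [Category.{w4} B₁]
    {B₂ : Type} [Category.{w5} B₂] {B₃ : Type} [Category.{w6} B₃]
    (F₁ : A₁ ⥤ A₂) (F₂ : A₂ ⥤ A₃) (G₁ : B₁ ⥤ B₂) (G₂ : B₂ ⥤ B₃) :
    (F₁ ⋙ F₂).prod (G₁ ⋙ G₂) = F₁.prod G₁ ⋙ F₂.prod G₂ :=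
  rfl

/-- The product of identity functors is the identity functor. -/
lemma prod_functor_id {A : Type} [Category.{w1} A] {B : Type} [Category.{w2} B] :
    (𝟭 A).prod (𝟭 B) = 𝟭 (A × B) :=
  rfl


variable {C D E : Type} [Groupoid C] [Groupoid D] [Groupoid E] (F : C × D ⥤ E)

/-- The congruence on `C`: two parallel morphisms are identified iff they have the same
image under `F(-, 𝟙 d)` for every object `d` of `D`. -/
def rC : HomRel C := fun {X Y} f f' =>
  ∀ d : D, F.map ((f, 𝟙 d) : (X, d) ⟶ (Y, d)) = F.map ((f', 𝟙 d) : (X, d) ⟶ (Y, d))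

/-- The congruence on `D`: two parallel morphisms are identified iff they have the same
image under `F(𝟙 c, -)` for every object `c` of `C`. -/
def rD : HomRel D := fun {X Y} g g' =>
  ∀ c : C, F.map ((𝟙 c, g) : (c, X) ⟶ (c, Y)) = F.map ((𝟙 c, g') : (c, X) ⟶ (c, Y))

lemma map_pair_decomp {c c' : C} {d d' : D} (f : c ⟶ c') (g : d ⟶ d') :
    F.map ((f, g) : (c, d) ⟶ (c', d')) =
      F.map ((f, 𝟙 d) : (c, d) ⟶ (c', d)) ≫ F.map ((𝟙 c', g) : (c', d) ⟶ (c', d')) := by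
  rw [← F.map_comp]
  congr 1
  simp [prod_comp]

lemma map_pair_decomp' {c c' : C} {d d' : D} (f : c ⟶ c') (g : d ⟶ d') :
    F.map ((f, g) : (c, d) ⟶ (c', d')) =
      F.map ((𝟙 c, g) : (c, d) ⟶ (c, d')) ≫ F.map ((f, 𝟙 d') : (c, d') ⟶ (c', d')) := by
  rw [← F.map_comp]
  congr 1
  simp [prod_comp]

instance congrC : Congruence (rC F) where
  equivalence :=
    ⟨fun _ _ => rfl, fun h d => (h d).symm, fun h h' d => (h d).trans (h' d)⟩
  comp_left := by
    intro X Y Z f g g' h d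
    have e : ∀ u : Y ⟶ Z, F.map ((f ≫ u, 𝟙 d) : (X, d) ⟶ (Z, d)) =
        F.map ((f, 𝟙 d) : (X, d) ⟶ (Y, d)) ≫ F.map ((u, 𝟙 d) : (Y, d) ⟶ (Z, d)) := by
      intro u; rw [← F.map_comp]; congr 1; simp [prod_comp]
    rw [e g, e g', h d]
  comp_right := by
    intro X Y Z f f' g h d
    have e : ∀ u : X ⟶ Y, F.map ((u ≫ g, 𝟙 d) : (X, d) ⟶ (Z, d)) =
        F.map ((u, 𝟙 d) : (X, d) ⟶ (Y, d)) ≫ F.map ((g, 𝟙 d) : (Y, d) ⟶ (Z, d)) := by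
      intro u; rw [← F.map_comp]; congr 1; simp [prod_comp]
    rw [e f, e f', h d]

instance congrD : Congruence (rD F) where
  equivalence :=
    ⟨fun _ _ => rfl, fun h c => (h c).symm, fun h h' c => (h c).trans (h' c)⟩
  comp_left := by
    intro X Y Z f g g' h c
    have e : ∀ u : Y ⟶ Z, F.map ((𝟙 c, f ≫ u) : (c, X) ⟶ (c, Z)) =
        F.map ((𝟙 c, f) : (c, X) ⟶ (c, Y)) ≫ F.map ((𝟙 c, u) : (c, Y) ⟶ (c, Z)) := by
      intro u; rw [← F.map_comp]; congr 1; simp [prod_comp]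
    rw [e g, e g', h c]
  comp_right := by
    intro X Y Z f f' g h c
    have e : ∀ u : X ⟶ Y, F.map ((𝟙 c, u ≫ g) : (c, X) ⟶ (c, Z)) =
        F.map ((𝟙 c, u) : (c, X) ⟶ (c, Y)) ≫ F.map ((𝟙 c, g) : (c, Y) ⟶ (c, Z)) := by
      intro u; rw [← F.map_comp]; congr 1; simp [prod_comp]
    rw [e f, e f', h c]

/-- The quotient of a groupoid by any hom relation is a groupoid. -/
noncomputable instance quotGroupoid {C : Type} [Groupoid C] (r : HomRel C) :
    Groupoid (CategoryTheory.Quotient r) :=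
  Groupoid.ofIsIso (by
    refine fun {X Y} f => CategoryTheory.Quotient.induction (r := r)
      (P := fun f => IsIso f) (fun {x y} g => ?_) f
    infer_instance)

section Finiteness

variable [Finite C] [Finite D]

lemma homE_finite (hE : Finite (Σ x y : E, x ⟶ y)) (x y : E) : Finite (x ⟶ y) := by
  have : Finite (Σ x y : E, x ⟶ y) := hE
  exact Finite.of_injective (fun f => (⟨x, y, f⟩ : Σ x y : E, x ⟶ y))
    (fun f g h => by simpa using h)

lemma finite_quot_objC : Finite (CategoryTheory.Quotient (rC F)) :=
  Finite.of_injective (fun a => a.as) (fun a b h => by cases a; cases b; simpa using h)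

lemma finite_quot_objD : Finite (CategoryTheory.Quotient (rD F)) :=
  Finite.of_injective (fun a => a.as) (fun a b h => by cases a; cases b; simpa using h)

lemma finite_quot_homC (hE : Finite (Σ x y : E, x ⟶ y))
    (a a' : CategoryTheory.Quotient (rC F)) : Finite (a ⟶ a') := by
  obtain ⟨x⟩ := a; obtain ⟨y⟩ := a'
  have hfib : ∀ d : D, Finite (F.obj (x, d) ⟶ F.obj (y, d)) := fun d => homE_finite hE _ _
  have : Finite (∀ d : D, F.obj (x, d) ⟶ F.obj (y, d)) := Pi.finite
  refine Finite.of_injective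
    (fun u : (⟨x⟩ : CategoryTheory.Quotient (rC F)) ⟶ ⟨y⟩ =>
      Quot.lift (fun f : x ⟶ y => fun d : D => F.map ((f, 𝟙 d) : (x, d) ⟶ (y, d)))
        (fun f g h => funext fun d =>
          ((HomRel.compClosure_iff_self (rC F) f g).mp h) d) u) ?_
  rintro ⟨f⟩ ⟨g⟩ h
  exact (CategoryTheory.Quotient.functor_map_eq_iff (rC F) f g).mpr (fun d => congrFun h d)

lemma finite_quot_homD (hE : Finite (Σ x y : E, x ⟶ y))
    (a a' : CategoryTheory.Quotient (rD F)) : Finite (a ⟶ a') := by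
  obtain ⟨x⟩ := a; obtain ⟨y⟩ := a'
  have hfib : ∀ c : C, Finite (F.obj (c, x) ⟶ F.obj (c, y)) := fun c => homE_finite hE _ _
  have : Finite (∀ c : C, F.obj (c, x) ⟶ F.obj (c, y)) := Pi.finite
  refine Finite.of_injective
    (fun u : (⟨x⟩ : CategoryTheory.Quotient (rD F)) ⟶ ⟨y⟩ =>
      Quot.lift (fun g : x ⟶ y => fun c : C => F.map ((𝟙 c, g) : (c, x) ⟶ (c, y)))
        (fun f g h => funext fun c =>
          ((HomRel.compClosure_iff_self (rD F) f g).mp h) c) u) ?_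
  rintro ⟨f⟩ ⟨g⟩ h
  exact (CategoryTheory.Quotient.functor_map_eq_iff (rD F) f g).mpr (fun c => congrFun h c)

end Finiteness

/-- Well-definedness of `F.map (f, g)` in the first variable. -/
lemma wd_left {x y : C} {u v : D} {f f' : x ⟶ y} (h : rC F f f') (g : u ⟶ v) :
    F.map ((f, g) : (x, u) ⟶ (y, v)) = F.map ((f', g) : (x, u) ⟶ (y, v)) := by
  rw [map_pair_decomp F f g, map_pair_decomp F f' g, h u]

/-- Well-definedness of `F.map (f, g)` in the second variable. -/
lemma wd_right {x y : C} {u v : D} (f : x ⟶ y) {g g' : u ⟶ v} (h : rD F g g') :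
    F.map ((f, g) : (x, u) ⟶ (y, v)) = F.map ((f, g') : (x, u) ⟶ (y, v)) := by
  rw [map_pair_decomp' F f g, map_pair_decomp' F f g', h x]

/-- The induced functor on the product of the two quotients. -/
def bigG : CategoryTheory.Quotient (rC F) × CategoryTheory.Quotient (rD F) ⥤ E where
  obj x := F.obj (x.1.as, x.2.as)
  map {x y} uv :=
    Quot.liftOn uv.1
      (fun f =>
        Quot.liftOn uv.2
          (fun g => F.map ((f, g) : (x.1.as, x.2.as) ⟶ (y.1.as, y.2.as)))
          (fun g g' h =>
            wd_right F f ((HomRel.compClosure_iff_self (rD F) g g').mp h)))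
      (fun f f' h => by
        induction uv.2 using Quot.inductionOn with
        | h g =>
          exact wd_left F ((HomRel.compClosure_iff_self (rC F) f f').mp h) g)
  map_id := by
    rintro ⟨⟨x⟩, ⟨y⟩⟩
    show F.map ((𝟙 x, 𝟙 y) : (x, y) ⟶ (x, y)) = 𝟙 _
    rw [show ((𝟙 x, 𝟙 y) : (x, y) ⟶ (x, y)) = 𝟙 (x, y) from rfl, F.map_id]
  map_comp := by
    rintro ⟨⟨x⟩, ⟨u⟩⟩ ⟨⟨y⟩, ⟨v⟩⟩ ⟨⟨z⟩, ⟨w⟩⟩ ⟨a, b⟩ ⟨a', b'⟩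
    induction a using Quot.inductionOn with
    | h f =>
    induction b using Quot.inductionOn with
    | h g =>
    induction a' using Quot.inductionOn with
    | h f' =>
    induction b' using Quot.inductionOn with
    | h g' =>
      show F.map ((f ≫ f', g ≫ g') : (x, u) ⟶ (z, w)) =
        F.map ((f, g) : (x, u) ⟶ (y, v)) ≫ F.map ((f', g') : (y, v) ⟶ (z, w))
      rw [← F.map_comp]
      congr 1

lemma fact_lemma :
    (CategoryTheory.Quotient.functor (rC F)).prod (CategoryTheory.Quotient.functor (rD F)) ⋙
      bigG F = F := by
  refine CategoryTheory.Functor.ext (fun x => rfl) ?_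
  rintro ⟨c, d⟩ ⟨c', d'⟩ ⟨f, g⟩
  simp only [eqToHom_refl, Category.comp_id, Category.id_comp]
  show _ = 𝟙 _ ≫ F.map (f, g) ≫ 𝟙 _
  simp only [Category.id_comp, Category.comp_id]
  rfl

/-- Sigma-encoded morphism surjectivity is closed under composition of functors. -/
lemma sigma_surj_comp {A B C' : Type} [Category.{w1} A] [Category.{w2} B] [Category.{w3} C']
    (P : A ⥤ B) (Q : B ⥤ C')
    (hP : Function.Surjective (fun z : Σ x y : A, x ⟶ y =>
      (⟨P.obj z.1, P.obj z.2.1, P.map z.2.2⟩ : Σ b b' : B, b ⟶ b')))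
    (hQ : Function.Surjective (fun z : Σ x y : B, x ⟶ y =>
      (⟨Q.obj z.1, Q.obj z.2.1, Q.map z.2.2⟩ : Σ c c' : C', c ⟶ c'))) :
    Function.Surjective (fun z : Σ x y : A, x ⟶ y =>
      (⟨(P ⋙ Q).obj z.1, (P ⋙ Q).obj z.2.1, (P ⋙ Q).map z.2.2⟩ : Σ c c' : C', c ⟶ c')) := by
  intro t
  obtain ⟨u, hu⟩ := hQ t
  obtain ⟨z, hz⟩ := hP u
  refine ⟨z, ?_⟩
  rw [← hu, ← hz]
  rfl

/-- The quotient functor is surjective on sigma-encoded morphisms. -/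
lemma quot_functor_sigma_surj {A : Type} [Category.{w1} A] (r : HomRel A) :
    Function.Surjective (fun z : Σ x y : A, x ⟶ y =>
      (⟨(CategoryTheory.Quotient.functor r).obj z.1, (CategoryTheory.Quotient.functor r).obj z.2.1,
        (CategoryTheory.Quotient.functor r).map z.2.2⟩ :
          Σ a a' : CategoryTheory.Quotient r, a ⟶ a')) := by
  rintro ⟨⟨x⟩, ⟨y⟩, u⟩
  induction u using Quot.inductionOn with
  | h f => exact ⟨⟨x, y, f⟩, rfl⟩

lemma bigG_uniq (H : CategoryTheory.Quotient (rC F) × CategoryTheory.Quotient (rD F) ⥤ E)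
    (hH : (CategoryTheory.Quotient.functor (rC F)).prod
        (CategoryTheory.Quotient.functor (rD F)) ⋙ H = F) :
    H = bigG F := by
  refine CategoryTheory.Functor.ext ?_ ?_
  · rintro ⟨⟨x⟩, ⟨y⟩⟩
    exact Functor.congr_obj hH ((x, y) : C × D)
  · rintro ⟨⟨x⟩, ⟨u⟩⟩ ⟨⟨y⟩, ⟨v⟩⟩ ⟨a, b⟩
    induction a using Quot.inductionOn with
    | h f =>
    induction b using Quot.inductionOn with
    | h g =>
      exact Functor.congr_hom hH ((f, g) : ((x, u) : C × D) ⟶ ((y, v) : C × D))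

end ProfiniteProductAux

open ProfiniteProductAux in
/-- for groupoids `C` and `D` with finitely many objects, the canonical map
`∧(C × D) → Ĉ × D̂` of profinite groupoids is an isomorphism; concretely, every functor
from `C × D` to a finite groupoid `E` factors uniquely through the product of suitable
finite quotients of `C` and `D`. -/
theorem profinite_completion_preserves_product_of_groupoids
    (C D : Type) [Groupoid C] [Groupoid D] [Finite C] [Finite D]
    (E : Type) [Groupoid E] (hE : Finite (Σ x y : E, x ⟶ y))
    (F : C × D ⥤ E) :
    Nonempty (ProdQuotFactorization C D E F) := by
  letI : ∀ x y : CategoryTheory.Quotient (rC F), Finite (x ⟶ y) := finite_quot_homC F hE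
  letI : ∀ x y : CategoryTheory.Quotient (rD F), Finite (x ⟶ y) := finite_quot_homD F hE
  letI : Finite (CategoryTheory.Quotient (rC F)) := finite_quot_objC F
  letI : Finite (CategoryTheory.Quotient (rD F)) := finite_quot_objD F
  letI instA : Groupoid.{u_3} (Lifted (CategoryTheory.Quotient (rC F))) := Lifted.groupoid _
  letI instB : Groupoid.{u_3} (Lifted (CategoryTheory.Quotient (rD F))) := Lifted.groupoid _
  refine ⟨{
    A := Lifted (CategoryTheory.Quotient (rC F))
    B := Lifted (CategoryTheory.Quotient (rD F))
    finA := Lifted.finite_sigma _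
    finB := Lifted.finite_sigma _
    p := CategoryTheory.Quotient.functor (rC F) ⋙ Lifted.toLift _
    q := CategoryTheory.Quotient.functor (rD F) ⋙ Lifted.toLift _
    G := (Lifted.fromLift _).prod (Lifted.fromLift _) ⋙ bigG F
    p_surj_obj := fun a => ⟨a.as.as, rfl⟩
    p_surj_map := sigma_surj_comp _ _ (quot_functor_sigma_surj (rC F)) (Lifted.toLift_surj_map _)
    q_surj_obj := fun b => ⟨b.as.as, rfl⟩
    q_surj_map := sigma_surj_comp _ _ (quot_functor_sigma_surj (rD F)) (Lifted.toLift_surj_map _)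
    fact := ?_
    uniq := ?_ }⟩
  · -- fact
    calc ((CategoryTheory.Quotient.functor (rC F) ⋙ Lifted.toLift _).prod
            (CategoryTheory.Quotient.functor (rD F) ⋙ Lifted.toLift _)) ⋙
          ((Lifted.fromLift _).prod (Lifted.fromLift _) ⋙ bigG F)
        = ((CategoryTheory.Quotient.functor (rC F)).prod
            (CategoryTheory.Quotient.functor (rD F))) ⋙
          ((((Lifted.toLift _).prod (Lifted.toLift _)) ⋙
            ((Lifted.fromLift _).prod (Lifted.fromLift _))) ⋙ bigG F) := rfl
      _ = ((CategoryTheory.Quotient.functor (rC F)).prod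
            (CategoryTheory.Quotient.functor (rD F))) ⋙ bigG F := by
          rw [← prod_functor_comp, Lifted.toLift_comp_fromLift, Lifted.toLift_comp_fromLift,
            prod_functor_id, Functor.id_comp]
      _ = F := fact_lemma F
  · -- uniq
    intro G' h
    have h2 : ((CategoryTheory.Quotient.functor (rC F)).prod
        (CategoryTheory.Quotient.functor (rD F))) ⋙
        (((Lifted.toLift _).prod (Lifted.toLift _)) ⋙ G') = F := h
    have h3 := bigG_uniq F _ h2
    have h4 : ((Lifted.fromLift _).prod (Lifted.fromLift _)) ⋙
        ((Lifted.toLift (CategoryTheory.Quotient (rC F))).prod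
          (Lifted.toLift (CategoryTheory.Quotient (rD F)))) = 𝟭 _ := by
      rw [← prod_functor_comp, Lifted.fromLift_comp_toLift, Lifted.fromLift_comp_toLift,
        prod_functor_id]
    calc G' = (((Lifted.fromLift _).prod (Lifted.fromLift _)) ⋙
            ((Lifted.toLift _).prod (Lifted.toLift _))) ⋙ G' := by
          rw [h4, Functor.id_comp]
      _ = ((Lifted.fromLift _).prod (Lifted.fromLift _)) ⋙
            (((Lifted.toLift _).prod (Lifted.toLift _)) ⋙ G') := rfl
      _ = ((Lifted.fromLift _).prod (Lifted.fromLift _)) ⋙ bigG F := by rw [h3]
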